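/- Let a ∈ K be a primitive ℓ-th root of unity, b ≥ 0 an integer, 𝓔 = {β_1, …, β_m} a K-basis of L, and for 0 ≤ i ≤ ℓ−1 set B_i = {β_1 a^{bi}, …, β_m a^{bi}}. Let t, r be positive integers and k_0 < k_1 < ⋯ < k_r be integers in {0, …, n−1} with k_r − k_0 ≤ t + r − 1. For each 0 ≤ i ≤ ℓ−1 choose j_i distinct elements α_1^(i), …, α_{j_i}^(i) of B_i, where j_0 + ⋯ + j_{ℓ−1} = t + r, and let D̃_i be the (r+1) × j_i matrix with (s, u)-entry σ^{k_s}(α_u^(i)) a^{k_s i}. Let s be a positive integer coprime with ℓ and with m. For 0 ≤ i ≤ t − 1, let A_i be the block matrix over L whose (j, k)-th block, for 0 ≤ j ≤ i and 0 ≤ k ≤ ℓ−1, is σ^{js}(D̃_k) a^{kjs} (σ applied entrywise). Then rank(A_i) ≥ r + i + 1; in particular rank(A_{t−1}) = r + t. -/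

import Mathlib

/-- The matrix `A_i` of Lemma 3: its `(j,k)`-th block, `0 ≤ j ≤ i`, `0 ≤ k ≤ ℓ-1`,
is `σ^{js}(D̃_k) a^{kjs}`, where `D̃_k` is the matrix with `(srow,u)`-entry
`σ^{k_{srow}}(α_u^{(k)}) a^{k_{srow} k}` and `α_u^{(k)} = β_u a^{bk}`. -/
noncomputable def roosMat {K L : Type*} [Field K] [Field L] [Algebra K L]
    (σ : L ≃ₐ[K] L) {m ℓ : ℕ} (a : K) (b : ℕ) (β : Module.Basis (Fin m) K L)
    {r : ℕ} (k : Fin (r + 1) → ℕ) (s : ℕ) (J : Fin ℓ → Finset (Fin m)) (i : ℕ) :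
    Matrix (Fin (i + 1) × Fin (r + 1)) {p : Fin ℓ × Fin m // p.2 ∈ J p.1} L :=
  Matrix.of fun q p =>
    (σ ^ ((q.1 : ℕ) * s + k q.2)) (β p.1.2 * (algebraMap K L a) ^ (b * (p.1.1 : ℕ)))
      * (algebraMap K L a) ^ ((k q.2 + (q.1 : ℕ) * s) * (p.1.1 : ℕ))

section Aux

variable {K L : Type*} [Field K] [Field L] [Algebra K L]
variable {m ℓ : ℕ}

/-- The basic column functions. -/
noncomputable def ffz (σ : L ≃ₐ[K] L) (a : K) (b : ℕ) (β : Module.Basis (Fin m) K L)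
    (p : Fin ℓ × Fin m) (e : ℤ) : L :=
  (σ ^ e) (β p.2 * (algebraMap K L a) ^ (b * (p.1 : ℕ)))
    * (algebraMap K L a) ^ (e * (p.1 : ℕ))

variable (σ : L ≃ₐ[K] L) (a : K) (b : ℕ) (β : Module.Basis (Fin m) K L)

theorem sigma_zpow_algebraMap (c : ℤ) (x : K) :
    (σ ^ c) (algebraMap K L x) = algebraMap K L x :=
  AlgEquiv.commutes (σ ^ c) x

theorem sigma_zpow_zpow (c z : ℤ) :
    (σ ^ c) ((algebraMap K L a) ^ z) = (algebraMap K L a) ^ z := by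
  rw [map_zpow₀, sigma_zpow_algebraMap]

theorem sigma_zpow_pow (c : ℤ) (w : ℕ) :
    (σ ^ c) ((algebraMap K L a) ^ w) = (algebraMap K L a) ^ w := by
  rw [map_pow, sigma_zpow_algebraMap]

theorem ffz_shift (ha : algebraMap K L a ≠ 0) (p : Fin ℓ × Fin m) (e c : ℤ) :
    ffz σ a b β p (e + c)
      = (algebraMap K L a) ^ (c * (p.1 : ℕ)) * (σ ^ c) (ffz σ a b β p e) := by
  unfold ffz
  have h1 : (σ ^ (e + c)) (β p.2 * (algebraMap K L a) ^ (b * (p.1 : ℕ)))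
      = (σ ^ c) ((σ ^ e) (β p.2 * (algebraMap K L a) ^ (b * (p.1 : ℕ)))) := by
    rw [add_comm, zpow_add, AlgEquiv.mul_apply]
  rw [h1, map_mul (σ ^ c), sigma_zpow_zpow,
    show (e + c) * ((p.1 : ℕ) : ℤ) = e * (p.1 : ℕ) + c * (p.1 : ℕ) by ring,
    zpow_add₀ ha]
  ring

end Aux

section Aux2

variable {K L : Type*} [Field K] [Field L] [Algebra K L]
variable {m ℓ : ℕ} [NeZero m] [NeZero ℓ]
variable (σ : L ≃ₐ[K] L) {a : K} (b : ℕ) (β : Module.Basis (Fin m) K L)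
set_option linter.unusedSectionVars false

theorem a_ne_zero' (ha : IsPrimitiveRoot a ℓ) : a ≠ 0 := by
  intro h
  have h1 := ha.pow_eq_one
  rw [h, zero_pow (NeZero.ne ℓ)] at h1
  exact zero_ne_one h1

theorem A_ne_zero (ha : IsPrimitiveRoot a ℓ) : algebraMap K L a ≠ 0 := by
  simpa using a_ne_zero' ha

theorem ffz_period (hσm : σ ^ m = 1) (ha : IsPrimitiveRoot a ℓ)
    (p : Fin ℓ × Fin m) (e z : ℤ) :
    ffz σ a b β p (e + ((ℓ * m : ℕ) : ℤ) * z) = ffz σ a b β p e := by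
  have hA := A_ne_zero (L := L) ha
  have hσn : σ ^ (((ℓ * m : ℕ) : ℤ) * z) = 1 := by
    rw [zpow_mul, zpow_natCast, mul_comm ℓ m, pow_mul, hσm, one_pow, one_zpow]
  have hAz : (algebraMap K L a) ^ ((((ℓ * m : ℕ) : ℤ) * z) * ((p.1 : ℕ) : ℤ)) = 1 := by
    rw [← map_zpow₀]
    have : a ^ ((((ℓ * m : ℕ) : ℤ) * z) * ((p.1 : ℕ) : ℤ)) = 1 := by
      rw [ha.zpow_eq_one_iff_dvd]
      exact ⟨(m : ℤ) * z * ((p.1 : ℕ) : ℤ), by push_cast; ring⟩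
    rw [this, map_one]
  unfold ffz
  rw [zpow_add σ, hσn, mul_one,
    show (e + ((ℓ * m : ℕ) : ℤ) * z) * ((p.1 : ℕ) : ℤ)
      = e * ((p.1 : ℕ) : ℤ) + (((ℓ * m : ℕ) : ℤ) * z) * ((p.1 : ℕ) : ℤ) by ring,
    zpow_add₀ hA, hAz, mul_one]

theorem A_zpow_ne_one (ha : IsPrimitiveRoot a ℓ) (hlm : Nat.Coprime ℓ m)
    (δ : ℤ) (hδ : δ ≠ 0) (hδl : δ.natAbs < ℓ) :
    (algebraMap K L a) ^ ((m : ℤ) * δ) ≠ 1 := by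
  intro h
  rw [← map_zpow₀, ← (algebraMap K L).map_one] at h
  have h2 : a ^ ((m : ℤ) * δ) = 1 := (algebraMap K L).injective h
  have h3 : (ℓ : ℤ) ∣ (m : ℤ) * δ := (ha.zpow_eq_one_iff_dvd _).mp h2
  have h4 : ℓ ∣ m * δ.natAbs := by
    have := Int.natAbs_dvd_natAbs.mpr h3
    simpa [Int.natAbs_mul] using this
  have h5 : ℓ ∣ δ.natAbs := (Nat.Coprime.dvd_of_dvd_mul_left hlm h4)
  have h6 : δ.natAbs ≠ 0 := by simpa using hδ
  exact absurd (Nat.le_of_dvd (Nat.pos_of_ne_zero h6) h5) (by omega)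

theorem fixed_in_range [FiniteDimensional K L] [IsGalois K L]
    (hσgen : ∀ τ : L ≃ₐ[K] L, τ ∈ Subgroup.zpowers σ) (x : L) (hx : σ x = x) :
    ∃ y : K, algebraMap K L y = x := by
  have hnat : ∀ (τ : L ≃ₐ[K] L), τ x = x → ∀ n : ℕ, (τ ^ n) x = x := by
    intro τ hτ n
    induction n with
    | zero => rw [pow_zero]; rfl
    | succ n ih => rw [pow_succ, AlgEquiv.mul_apply, hτ, ih]
  have hinv : σ⁻¹ x = x := by
    have h1 := congrArg (⇑σ⁻¹) hx
    rw [← AlgEquiv.mul_apply, inv_mul_cancel, AlgEquiv.one_apply] at h1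
    exact h1.symm
  have hall : ∀ τ : L ≃ₐ[K] L, τ x = x := by
    intro τ
    obtain ⟨z, hz⟩ := Subgroup.mem_zpowers_iff.mp (hσgen τ)
    rw [← hz]
    rcases z with n | n
    · rw [Int.ofNat_eq_coe, zpow_natCast]; exact hnat σ hx n
    · rw [zpow_negSucc, ← inv_pow]; exact hnat σ⁻¹ hinv (n + 1)
  have hmem : x ∈ IntermediateField.fixedField (⊤ : Subgroup (L ≃ₐ[K] L)) := by
    intro g
    exact hall g
  have hbot : IntermediateField.fixedField (⊤ : Subgroup (L ≃ₐ[K] L)) = ⊥ :=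
    ((IsGalois.tfae (F := K) (E := L)).out 0 1).mp (inferInstance : IsGalois K L)
  rw [hbot, IntermediateField.mem_bot] at hmem
  exact hmem

end Aux2

section Main

variable {K L : Type*} [Field K] [Field L] [Algebra K L]
variable {m ℓ : ℕ} [NeZero m] [NeZero ℓ]
variable (σ : L ≃ₐ[K] L) {a : K} (b : ℕ) (β : Module.Basis (Fin m) K L)
set_option linter.unusedSectionVars false

theorem sigma_inv_zpow (z : ℤ) :
    σ⁻¹ ((algebraMap K L a) ^ z) = (algebraMap K L a) ^ z := by
  have := sigma_zpow_zpow σ a (-1) z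
  rwa [zpow_neg_one] at this

theorem sigma_inv_sigma (x : L) : σ⁻¹ (σ x) = x := by
  rw [← AlgEquiv.mul_apply, inv_mul_cancel, AlgEquiv.one_apply]

theorem ffz_succ (ha : IsPrimitiveRoot a ℓ) (p : Fin ℓ × Fin m) (e : ℤ) :
    σ⁻¹ (ffz σ a b β p (e + 1))
      = (algebraMap K L a) ^ (((p.1 : ℕ) : ℤ)) * ffz σ a b β p e := by
  rw [ffz_shift σ a b β (A_ne_zero ha) p e 1, map_mul, zpow_one, sigma_inv_sigma,
    sigma_inv_zpow, one_mul]

theorem main_window [FiniteDimensional K L] [IsGalois K L]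
    (hσgen : ∀ τ : L ≃ₐ[K] L, τ ∈ Subgroup.zpowers σ)
    (hσm : σ ^ m = 1) (ha : IsPrimitiveRoot a ℓ) (hlm : Nat.Coprime ℓ m) :
    ∀ (N : ℕ) (T : Finset (Fin ℓ × Fin m)) (c : Fin ℓ × Fin m → L) (e₀ : ℤ),
      T.card = N →
      (∀ d : ℕ, d < N → ∑ p ∈ T, c p * ffz σ a b β p (e₀ + d) = 0) →
      ∀ p ∈ T, c p = 0 := by
  have hA : algebraMap K L a ≠ 0 := A_ne_zero ha
  intro N
  induction N using Nat.strong_induction_on with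
  | _ N IH =>
    intro T c e₀ hcard hEq p₀ hp₀T
    by_contra hc0
    -- normalize
    set A := algebraMap K L a with hAdef
    set c' : Fin ℓ × Fin m → L := fun p => c p / c p₀ with hc'def
    have hc'p₀ : c' p₀ = 1 := div_self hc0
    have hEq' : ∀ d : ℕ, d < N → ∑ p ∈ T, c' p * ffz σ a b β p (e₀ + d) = 0 := by
      intro d hd
      have h1 := hEq d hd
      have : ∑ p ∈ T, c' p * ffz σ a b β p (e₀ + d)
          = (c p₀)⁻¹ * ∑ p ∈ T, c p * ffz σ a b β p (e₀ + d) := by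
        rw [Finset.mul_sum]
        refine Finset.sum_congr rfl fun p _ => ?_
        simp only [hc'def, div_eq_inv_mul]
        ring
      rw [this, h1, mul_zero]
    have hN : 0 < N := by
      rw [← hcard]
      exact Finset.card_pos.mpr ⟨p₀, hp₀T⟩
    set zk : Fin ℓ × Fin m → ℤ := fun p => ((p.1 : ℕ) : ℤ) with hzkdef
    set dd : Fin ℓ × Fin m → L :=
      fun p => σ⁻¹ (c' p) * A ^ (zk p - zk p₀) - c' p with hdddef
    have hddp₀ : dd p₀ = 0 := by
      simp [hdddef, hc'p₀]
    -- derived equations on the erased set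
    have hEq'' : ∀ d : ℕ, d < N - 1 →
        ∑ p ∈ T.erase p₀, dd p * ffz σ a b β p (e₀ + d) = 0 := by
      intro d hd
      have hsum : ∑ p ∈ T.erase p₀, dd p * ffz σ a b β p (e₀ + d)
          = ∑ p ∈ T, dd p * ffz σ a b β p (e₀ + d) :=
        Finset.sum_erase T (by rw [hddp₀, zero_mul])
      rw [hsum]
      have e1 := hEq' d (by omega)
      have e2 := hEq' (d + 1) (by omega)
      have e2' : ∑ p ∈ T, c' p * ffz σ a b β p ((e₀ + d) + 1) = 0 := by
        rw [← e2]
        refine Finset.sum_congr rfl fun p _ => ?_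
        congr 1
        push_cast
        ring
      have e3 : ∑ p ∈ T, σ⁻¹ (c' p) * (A ^ (zk p) * ffz σ a b β p (e₀ + d)) = 0 := by
        have := congrArg (⇑σ⁻¹) e2'
        rw [map_sum, map_zero] at this
        rw [← this]
        refine Finset.sum_congr rfl fun p _ => ?_
        rw [map_mul, ffz_succ σ b β ha]
      calc ∑ p ∈ T, dd p * ffz σ a b β p (e₀ + d)
          = A ^ (-(zk p₀)) * (∑ p ∈ T, σ⁻¹ (c' p) * (A ^ (zk p) * ffz σ a b β p (e₀ + d)))
            - ∑ p ∈ T, c' p * ffz σ a b β p (e₀ + d) := by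
            rw [Finset.mul_sum, ← Finset.sum_sub_distrib]
            refine Finset.sum_congr rfl fun p _ => ?_
            simp only [hdddef]
            have hz : A ^ (zk p - zk p₀) = A ^ (-(zk p₀)) * A ^ (zk p) := by
              rw [← zpow_add₀ hA]
              congr 1
              ring
            rw [hz]
            ring
        _ = 0 := by rw [e1, e3, mul_zero, sub_zero]
    have hcard' : (T.erase p₀).card = N - 1 := by
      rw [Finset.card_erase_of_mem hp₀T, hcard]
    have hdd0 : ∀ p ∈ T.erase p₀, dd p = 0 :=
      IH (N - 1) (by omega) (T.erase p₀) dd e₀ hcard' hEq''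
    -- coefficients with different first index vanish
    have hvanish : ∀ p ∈ T, p.1 ≠ p₀.1 → c' p = 0 := by
      intro p hpT hp1
      have hpe : p ∈ T.erase p₀ :=
        Finset.mem_erase.mpr ⟨fun h => hp1 (by rw [h]), hpT⟩
      have h0 := hdd0 p hpe
      simp only [hdddef] at h0
      have hrec : σ⁻¹ (c' p) * A ^ (zk p - zk p₀) = c' p := sub_eq_zero.mp h0
      set δ : ℤ := zk p - zk p₀ with hδdef
      have hiter : ∀ j : ℕ, (σ ^ (-(j : ℤ))) (c' p) * A ^ ((j : ℤ) * δ) = c' p := by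
        intro j
        induction j with
        | zero => simp
        | succ j ih =>
          have hstep : (σ ^ (-((j : ℤ) + 1))) (c' p) = (σ ^ (-(j : ℤ))) (σ⁻¹ (c' p)) := by
            rw [show (-((j : ℤ) + 1)) = (-(j : ℤ)) + (-1) by ring, zpow_add,
              AlgEquiv.mul_apply, zpow_neg_one]
          rw [show (-(((j + 1) : ℕ) : ℤ)) = -((j : ℤ) + 1) by push_cast; ring, hstep]
          have hmul : A ^ ((((j + 1) : ℕ) : ℤ) * δ) = A ^ δ * A ^ ((j : ℤ) * δ) := by
            rw [← zpow_add₀ hA]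
            congr 1
            push_cast
            ring
          rw [hmul]
          calc (σ ^ (-(j : ℤ))) (σ⁻¹ (c' p)) * (A ^ δ * A ^ ((j : ℤ) * δ))
              = ((σ ^ (-(j : ℤ))) (σ⁻¹ (c' p)) * (σ ^ (-(j : ℤ))) (A ^ δ)) * A ^ ((j : ℤ) * δ) := by
                rw [sigma_zpow_zpow]
                ring
            _ = (σ ^ (-(j : ℤ))) (σ⁻¹ (c' p) * A ^ δ) * A ^ ((j : ℤ) * δ) := by rw [map_mul]
            _ = (σ ^ (-(j : ℤ))) (c' p) * A ^ ((j : ℤ) * δ) := by rw [hrec]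
            _ = c' p := ih
      have hm := hiter m
      have hσ1 : σ ^ (-(m : ℤ)) = 1 := by
        rw [zpow_neg, zpow_natCast, hσm, inv_one]
      rw [hσ1, AlgEquiv.one_apply] at hm
      have hδ0 : δ ≠ 0 := by
        simp only [hδdef, hzkdef, sub_ne_zero]
        intro h
        exact hp1 (Fin.val_injective (by exact_mod_cast h))
      have hδl : δ.natAbs < ℓ := by
        have h1 : ((p.1 : ℕ) : ℤ) = zk p := rfl
        have h2 : (p.1 : ℕ) < ℓ := p.1.isLt
        have h3 : (p₀.1 : ℕ) < ℓ := p₀.1.isLt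
        simp only [hδdef, hzkdef]
        omega
      have hne : A ^ ((m : ℤ) * δ) ≠ 1 := A_zpow_ne_one ha hlm δ hδ0 hδl
      by_contra hcp
      apply hne
      have : c' p * A ^ ((m : ℤ) * δ) = c' p * 1 := by rw [mul_one]; exact hm
      exact mul_left_cancel₀ hcp this
    -- coefficients with the same first index are in K
    have hKrange : ∀ p ∈ T, p.1 = p₀.1 → ∃ y : K, algebraMap K L y = c' p := by
      intro p hpT hp1
      by_cases hpp : p = p₀
      · exact ⟨1, by rw [map_one, hpp, hc'p₀]⟩
      · have hpe : p ∈ T.erase p₀ := Finset.mem_erase.mpr ⟨hpp, hpT⟩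
        have h0 := hdd0 p hpe
        simp only [hdddef] at h0
        have hδ0 : zk p - zk p₀ = 0 := by
          simp only [hzkdef, sub_eq_zero]
          exact_mod_cast congrArg (fun x : Fin ℓ => ((x : ℕ) : ℤ)) hp1
        rw [hδ0, zpow_zero, mul_one] at h0
        have h1 : σ⁻¹ (c' p) = c' p := sub_eq_zero.mp h0
        have hfix : σ (c' p) = c' p := by
          have h2 := congrArg (⇑σ) h1
          rw [← AlgEquiv.mul_apply, mul_inv_cancel, AlgEquiv.one_apply] at h2
          exact h2.symm
        exact fixed_in_range σ hσgen _ hfix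
    -- the d = 0 equation gives a contradiction with the basis
    classical
    have e0 : ∑ p ∈ T, c' p * ffz σ a b β p e₀ = 0 := by
      have := hEq' 0 hN
      simpa using this
    set S := T.filter (fun p => p.1 = p₀.1) with hSdef
    have hp₀S : p₀ ∈ S := Finset.mem_filter.mpr ⟨hp₀T, rfl⟩
    have hzero2 : ∑ p ∈ T.filter (fun p => ¬ p.1 = p₀.1), c' p * ffz σ a b β p e₀ = 0 :=
      Finset.sum_eq_zero fun p hp => by
        obtain ⟨hpT, hp1⟩ := Finset.mem_filter.mp hp
        rw [hvanish p hpT hp1, zero_mul]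
    have eS : ∑ p ∈ S, c' p * ffz σ a b β p e₀ = 0 := by
      have hsplit := Finset.sum_filter_add_sum_filter_not T (fun p => p.1 = p₀.1)
        (fun p => c' p * ffz σ a b β p e₀)
      rw [hzero2, add_zero] at hsplit
      rw [hSdef]
      rw [hsplit, e0]
    set CC : L := A ^ (b * (p₀.1 : ℕ)) * A ^ (e₀ * ((p₀.1 : ℕ) : ℤ)) with hCCdef
    have hCC : CC ≠ 0 := mul_ne_zero (pow_ne_zero _ hA) (zpow_ne_zero _ hA)
    have hterm : ∀ p ∈ S, c' p * ffz σ a b β p e₀ = (c' p * (σ ^ e₀) (β p.2)) * CC := by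
      intro p hp
      obtain ⟨hpT, hp1⟩ := Finset.mem_filter.mp hp
      unfold ffz
      rw [hp1, map_mul, sigma_zpow_pow, hCCdef]
      ring
    have eS2 : (∑ p ∈ S, c' p * (σ ^ e₀) (β p.2)) * CC = 0 := by
      rw [Finset.sum_mul, ← eS]
      exact (Finset.sum_congr rfl hterm).symm
    have eS3 : ∑ p ∈ S, c' p * (σ ^ e₀) (β p.2) = 0 := by
      rcases mul_eq_zero.mp eS2 with h | h
      · exact h
      · exact absurd h hCC
    set Y : Fin ℓ × Fin m → K :=
      fun p => if h : ∃ y : K, algebraMap K L y = c' p then h.choose else 0 with hYdef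
    have hYs : ∀ p ∈ S, algebraMap K L (Y p) = c' p := by
      intro p hp
      obtain ⟨hpT, hp1⟩ := Finset.mem_filter.mp hp
      have hex := hKrange p hpT hp1
      simp only [hYdef, dif_pos hex]
      exact hex.choose_spec
    have eS4 : (σ ^ e₀) (∑ p ∈ S, Y p • β p.2) = 0 := by
      rw [map_sum, ← eS3]
      refine Finset.sum_congr rfl fun p hp => ?_
      rw [map_smul, Algebra.smul_def, hYs p hp]
    have eS5 : ∑ p ∈ S, Y p • β p.2 = 0 := by
      apply (σ ^ e₀).injective
      rw [eS4, map_zero]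
    have hinj : ∀ p ∈ S, ∀ q ∈ S, p.2 = q.2 → p = q := by
      intro p hp q hq h2
      obtain ⟨_, hp1⟩ := Finset.mem_filter.mp hp
      obtain ⟨_, hq1⟩ := Finset.mem_filter.mp hq
      exact Prod.ext (hp1.trans hq1.symm) h2
    have eS6 : ∑ u ∈ S.image Prod.snd, Y (p₀.1, u) • β u = 0 := by
      rw [Finset.sum_image hinj, ← eS5]
      refine Finset.sum_congr rfl fun p hp => ?_
      obtain ⟨_, hp1⟩ := Finset.mem_filter.mp hp
      congr 1
      · rw [← hp1]
    have hY0 : Y (p₀.1, p₀.2) = 0 :=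
      linearIndependent_iff'.mp β.linearIndependent _ _ eS6 p₀.2
        (Finset.mem_image.mpr ⟨p₀, hp₀S, rfl⟩)
    have hfin := hYs p₀ hp₀S
    rw [show (p₀.1, p₀.2) = p₀ from rfl] at hY0
    rw [hY0, map_zero, hc'p₀] at hfin
    exact zero_ne_one hfin

end Main

section Rank

variable {K L : Type*} [Field K] [Field L] [Algebra K L]
variable {m ℓ : ℕ} [NeZero m] [NeZero ℓ]
variable (σ : L ≃ₐ[K] L) (a : K) (b : ℕ) (β : Module.Basis (Fin m) K L)
variable {r : ℕ} (k : Fin (r + 1) → ℕ) (s : ℕ) (J : Fin ℓ → Finset (Fin m))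
set_option linter.unusedSectionVars false

theorem ffz_natCast (p : Fin ℓ × Fin m) (e : ℕ) :
    ffz σ a b β p ((e : ℕ) : ℤ)
      = (σ ^ e) (β p.2 * (algebraMap K L a) ^ (b * (p.1 : ℕ)))
        * (algebraMap K L a) ^ (e * (p.1 : ℕ)) := by
  unfold ffz
  rw [zpow_natCast]
  congr 1
  rw [show ((e : ℕ) : ℤ) * (((p.1 : ℕ)) : ℤ) = ((e * (p.1 : ℕ) : ℕ) : ℤ) by push_cast; ring,
    zpow_natCast]

theorem roosMat_apply {i : ℕ} (q : Fin (i + 1) × Fin (r + 1))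
    (p : {p : Fin ℓ × Fin m // p.2 ∈ J p.1}) :
    roosMat σ a b β k s J i q p
      = ffz σ a b β (p : Fin ℓ × Fin m) (((q.1 : ℕ) * s + k q.2 : ℕ) : ℤ) := by
  rw [ffz_natCast]
  simp only [roosMat, Matrix.of_apply]
  rw [show (k q.2 + (q.1 : ℕ) * s) * ((p : Fin ℓ × Fin m).1 : ℕ)
    = ((q.1 : ℕ) * s + k q.2) * ((p : Fin ℓ × Fin m).1 : ℕ) by ring]

/-- The linear-combination sums appearing in the kernel conditions. -/
noncomputable def Qsum (c : {p : Fin ℓ × Fin m // p.2 ∈ J p.1} → L) (e : ℤ) : L :=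
  ∑ p, c p * ffz σ a b β (p : Fin ℓ × Fin m) e

theorem mem_ker_iff (i : ℕ) (c : {p : Fin ℓ × Fin m // p.2 ∈ J p.1} → L) :
    c ∈ LinearMap.ker (roosMat σ a b β k s J i).mulVecLin
      ↔ ∀ (j : Fin (i + 1)) (q : Fin (r + 1)),
          Qsum σ a b β J c (((j : ℕ) * s + k q : ℕ) : ℤ) = 0 := by
  rw [LinearMap.mem_ker]
  have hrow : ∀ (x : Fin (i + 1) × Fin (r + 1)),
      (roosMat σ a b β k s J i).mulVecLin c x
        = Qsum σ a b β J c (((x.1 : ℕ) * s + k x.2 : ℕ) : ℤ) := by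
    intro x
    rw [Matrix.mulVecLin_apply]
    simp only [Matrix.mulVec, dotProduct, Qsum]
    refine Finset.sum_congr rfl fun p _ => ?_
    rw [roosMat_apply]
    ring
  constructor
  · intro h j q
    rw [← hrow (j, q), h]
    rfl
  · intro h
    funext x
    rw [hrow x, h x.1 x.2]
    rfl

theorem qsum_period (hσm : σ ^ m = 1) (ha : IsPrimitiveRoot a ℓ)
    (c : {p : Fin ℓ × Fin m // p.2 ∈ J p.1} → L) (e z : ℤ)
    (h : Qsum σ a b β J c e = 0) :
    Qsum σ a b β J c (e + ((ℓ * m : ℕ) : ℤ) * z) = 0 := by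
  rw [← h]
  refine Finset.sum_congr rfl fun p _ => ?_
  rw [ffz_period σ b β hσm ha]

theorem qsum_zero_of_window [FiniteDimensional K L] [IsGalois K L]
    (hσgen : ∀ τ : L ≃ₐ[K] L, τ ∈ Subgroup.zpowers σ)
    (hσm : σ ^ m = 1) (ha : IsPrimitiveRoot a ℓ) (hlm : Nat.Coprime ℓ m)
    (c : {p : Fin ℓ × Fin m // p.2 ∈ J p.1} → L) (e₀ : ℤ)
    (hv : ∀ d : ℕ, d < Fintype.card {p : Fin ℓ × Fin m // p.2 ∈ J p.1} →
      Qsum σ a b β J c (e₀ + d) = 0) :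
    c = 0 := by
  classical
  set T := Finset.univ.filter (fun p : Fin ℓ × Fin m => p.2 ∈ J p.1) with hTdef
  set cb : Fin ℓ × Fin m → L :=
    fun p => if h : p.2 ∈ J p.1 then c ⟨p, h⟩ else 0 with hcbdef
  have hTmem : ∀ x : Fin ℓ × Fin m, x ∈ T ↔ x.2 ∈ J x.1 := by
    intro x
    simp [hTdef]
  have hTcard : T.card = Fintype.card {p : Fin ℓ × Fin m // p.2 ∈ J p.1} :=
    (Fintype.card_subtype _).symm
  have hsum : ∀ e : ℤ,
      ∑ p ∈ T, cb p * ffz σ a b β p e = Qsum σ a b β J c e := by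
    intro e
    rw [Finset.sum_subtype T hTmem (fun p => cb p * ffz σ a b β p e)]
    refine Finset.sum_congr rfl fun p _ => ?_
    simp only [hcbdef, dif_pos p.prop]
  have h0 := main_window σ b β hσgen hσm ha hlm
    (Fintype.card {p : Fin ℓ × Fin m // p.2 ∈ J p.1}) T cb e₀ hTcard
    (fun d hd => by rw [hsum]; exact hv d hd)
  funext p
  have h1 := h0 (p : Fin ℓ × Fin m) ((hTmem _).mpr p.prop)
  simp only [hcbdef, dif_pos p.prop] at h1
  simpa using h1

end Rank
section RankMain
open Matrix

variable {K L : Type*} [Field K] [Field L] [Algebra K L]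
variable {m ℓ : ℕ} [NeZero m] [NeZero ℓ]
variable (σ : L ≃ₐ[K] L) (a : K) (b : ℕ) (β : Module.Basis (Fin m) K L)
variable {r : ℕ} (k : Fin (r + 1) → ℕ) (s : ℕ) (J : Fin ℓ → Finset (Fin m))
set_option linter.unusedSectionVars false
set_option maxHeartbeats 1000000

theorem algequiv_fix_zpow (τ : L ≃ₐ[K] L) (z : ℤ) :
    τ ((algebraMap K L a) ^ z) = (algebraMap K L a) ^ z := by
  rw [_root_.map_zpow₀, AlgEquiv.commutes]

/-- The twisted shift operator on coefficient vectors, as a `K`-linear map. -/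
noncomputable def psiMap :
    ({p : Fin ℓ × Fin m // p.2 ∈ J p.1} → L) →ₗ[K] ({p : Fin ℓ × Fin m // p.2 ∈ J p.1} → L) where
  toFun c p := ((σ ^ s)⁻¹ : L ≃ₐ[K] L) (c p)
    * (algebraMap K L a) ^ (s * (((p : Fin ℓ × Fin m)).1 : ℕ))
  map_add' c₁ c₂ := by
    funext p
    simp only [Pi.add_apply, _root_.map_add]
    ring
  map_smul' x c := by
    funext p
    simp only [Pi.smul_apply, _root_.map_smul, RingHom.id_apply, smul_mul_assoc]

theorem psiMap_apply (c : {p : Fin ℓ × Fin m // p.2 ∈ J p.1} → L)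
    (p : {p : Fin ℓ × Fin m // p.2 ∈ J p.1}) :
    psiMap σ a s J c p = ((σ ^ s)⁻¹ : L ≃ₐ[K] L) (c p)
      * (algebraMap K L a) ^ (s * (((p : Fin ℓ × Fin m)).1 : ℕ)) := rfl

theorem sigma_pow_inv_ffz (ha : IsPrimitiveRoot a ℓ) (p : Fin ℓ × Fin m) (e : ℤ) :
    ((σ ^ s)⁻¹ : L ≃ₐ[K] L) (ffz σ a b β p e)
      = (algebraMap K L a) ^ (((s : ℕ) : ℤ) * ((p.1 : ℕ) : ℤ)) * ffz σ a b β p (e - s) := by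
  have hA : algebraMap K L a ≠ 0 := A_ne_zero ha
  have h0 := ffz_shift σ a b β hA p (e - s) ((s : ℕ) : ℤ)
  rw [sub_add_cancel, zpow_natCast] at h0
  rw [h0, _root_.map_mul, algequiv_fix_zpow, ← AlgEquiv.mul_apply, inv_mul_cancel,
    AlgEquiv.one_apply]

theorem qsum_psi (ha : IsPrimitiveRoot a ℓ)
    (c : {p : Fin ℓ × Fin m // p.2 ∈ J p.1} → L) (e : ℤ)
    (h : Qsum σ a b β J c e = 0) :
    Qsum σ a b β J (psiMap σ a s J c) (e - s) = 0 := by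
  unfold Qsum at h ⊢
  calc ∑ p, psiMap σ a s J c p * ffz σ a b β (p : Fin ℓ × Fin m) (e - s)
      = ∑ p : {p : Fin ℓ × Fin m // p.2 ∈ J p.1},
          ((σ ^ s)⁻¹ : L ≃ₐ[K] L) (c p * ffz σ a b β (p : Fin ℓ × Fin m) e) := by
        refine Finset.sum_congr rfl fun p _ => ?_
        rw [_root_.map_mul, psiMap_apply, sigma_pow_inv_ffz σ a b β s ha]
        rw [show (algebraMap K L a) ^ (s * (((p : Fin ℓ × Fin m)).1 : ℕ))
          = (algebraMap K L a) ^ (((s : ℕ) : ℤ) * (((p : Fin ℓ × Fin m).1 : ℕ) : ℤ)) by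
            rw [show ((s : ℕ) : ℤ) * (((p : Fin ℓ × Fin m).1 : ℕ) : ℤ)
              = ((s * ((p : Fin ℓ × Fin m).1 : ℕ) : ℕ) : ℤ) by push_cast; ring, zpow_natCast]]
        ring
    _ = ((σ ^ s)⁻¹ : L ≃ₐ[K] L) (∑ p, c p * ffz σ a b β (p : Fin ℓ × Fin m) e) :=
        (_root_.map_sum _ _ _).symm
    _ = 0 := by rw [h, _root_.map_zero]

theorem roosMat_rank_lb [IsGalois K L] (hLK : Module.finrank K L = m)
    (hσgen : ∀ τ : L ≃ₐ[K] L, τ ∈ Subgroup.zpowers σ)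
    (hlm : Nat.Coprime ℓ m) (ha : IsPrimitiveRoot a ℓ)
    {t : ℕ} (ht : 0 < t) (hr : 0 < r)
    (hkmono : StrictMono k) (hkspread : k (Fin.last r) - k 0 ≤ t + r - 1)
    (hJ : ∑ i, (J i).card = t + r)
    (hs : 0 < s) (hsl : Nat.Coprime s ℓ) (hsm : Nat.Coprime s m) :
    ∀ i : ℕ, i < t → r + i + 1 ≤ (roosMat σ a b β k s J i).rank := by
  classical
  have hFD : FiniteDimensional K L :=
    Module.finite_of_finrank_pos (by rw [hLK]; exact Nat.pos_of_ne_zero (NeZero.ne m))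
  have hσm : σ ^ m = 1 := by
    rw [← hLK, ← IsGalois.card_aut_eq_finrank K L]
    exact pow_card_eq_one'
  have hA : algebraMap K L a ≠ 0 := A_ne_zero ha
  have hcard : Fintype.card {p : Fin ℓ × Fin m // p.2 ∈ J p.1} = t + r := by
    rw [Fintype.card_congr
      (Equiv.subtypeProdEquivSigmaSubtype (fun (x : Fin ℓ) (u : Fin m) => u ∈ J x)),
      Fintype.card_sigma, ← hJ]
    exact Finset.sum_congr rfl fun x _ => Fintype.card_coe (J x)
  have hpifin : Module.finrank L ({p : Fin ℓ × Fin m // p.2 ∈ J p.1} → L) = t + r := by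
    rw [Module.finrank_pi, hcard]
  have hrn : ∀ i : ℕ, (roosMat σ a b β k s J i).rank
      + Module.finrank L (LinearMap.ker (roosMat σ a b β k s J i).mulVecLin) = t + r := by
    intro i
    have h1 := LinearMap.finrank_range_add_finrank_ker (roosMat σ a b β k s J i).mulVecLin
    rw [hpifin] at h1
    unfold Matrix.rank
    exact h1
  -- the square window matrix
  set M0 : Matrix (Fin (t + r)) {p : Fin ℓ × Fin m // p.2 ∈ J p.1} L :=
    Matrix.of (fun d p => ffz σ a b β (p : Fin ℓ × Fin m) (((k 0 : ℕ) : ℤ) + ((d : ℕ) : ℤ)))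
    with hM0
  have hM0ker : LinearMap.ker M0.mulVecLin = ⊥ := by
    rw [Submodule.eq_bot_iff]
    intro v hv
    rw [LinearMap.mem_ker] at hv
    apply qsum_zero_of_window σ a b β J hσgen hσm ha hlm v ((k 0 : ℕ) : ℤ)
    intro d hd
    have hd' : d < t + r := hcard ▸ hd
    have h2 := congrFun hv ⟨d, hd'⟩
    rw [Matrix.mulVecLin_apply] at h2
    simp only [Matrix.mulVec, dotProduct, hM0, Matrix.of_apply, Pi.zero_apply] at h2
    unfold Qsum
    rw [← h2]
    exact Finset.sum_congr rfl fun p _ => mul_comm _ _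
  have hM0rank : M0.rank = t + r := by
    have h1 := LinearMap.finrank_range_add_finrank_ker M0.mulVecLin
    rw [hpifin, hM0ker, finrank_bot, add_zero] at h1
    unfold Matrix.rank
    exact h1
  have hM0T : LinearMap.ker M0ᵀ.mulVecLin = ⊥ := by
    have h1 := LinearMap.finrank_range_add_finrank_ker M0ᵀ.mulVecLin
    rw [Module.finrank_pi, Fintype.card_fin] at h1
    have h2 : M0ᵀ.rank = t + r := (Matrix.rank_transpose M0).trans hM0rank
    unfold Matrix.rank at h2
    rw [h2] at h1
    have h3 : Module.finrank L (LinearMap.ker M0ᵀ.mulVecLin) = 0 := by omega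
    exact Submodule.finrank_eq_zero.mp h3
  -- row embedding for the base case
  have hkle : ∀ q : Fin (r + 1), k 0 ≤ k q := fun q => hkmono.monotone (Fin.zero_le q)
  have hkub : ∀ q : Fin (r + 1), k q - k 0 < t + r := by
    intro q
    have h1 := hkmono.monotone (Fin.le_last q)
    have h2 := hkle q
    omega
  set e : Fin (r + 1) → Fin (t + r) := fun q => ⟨k q - k 0, hkub q⟩ with hedef
  have heinj : Function.Injective e := by
    intro q q' h
    have h1 : k q - k 0 = k q' - k 0 := congrArg Fin.val h
    have h2 := hkle q
    have h3 := hkle q'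
    exact hkmono.injective (by omega)
  have hbase : (roosMat σ a b β k s J 0).rank = r + 1 := by
    have hTker : LinearMap.ker (roosMat σ a b β k s J 0)ᵀ.mulVecLin = ⊥ := by
      rw [Submodule.eq_bot_iff]
      intro lam hlam
      rw [LinearMap.mem_ker] at hlam
      set lam' : Fin (t + r) → L := fun d =>
        if h : ∃ q : Fin (r + 1), e q = d then lam (0, h.choose) else 0 with hlamdef
      have hlam'e : ∀ q : Fin (r + 1), lam' (e q) = lam (0, q) := by
        intro q
        have hex : ∃ q' : Fin (r + 1), e q' = e q := ⟨q, rfl⟩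
        simp only [hlamdef, dif_pos hex]
        exact congrArg (fun q' => lam (0, q')) (heinj hex.choose_spec)
      have hentry : ∀ (q : Fin (r + 1)) (p : {p : Fin ℓ × Fin m // p.2 ∈ J p.1}),
          M0 (e q) p = roosMat σ a b β k s J 0 ((0 : Fin 1), q) p := by
        intro q p
        have h1 := hkle q
        have hexp : ((k 0 : ℕ) : ℤ) + (((e q) : ℕ) : ℤ)
            = ((((0 : Fin 1) : ℕ) * s + k q : ℕ) : ℤ) := by
          have hev : ((e q) : ℕ) = k q - k 0 := rfl
          have h0v : (((0 : Fin 1)) : ℕ) = 0 := rfl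
          rw [hev, h0v]
          omega
        rw [roosMat_apply]
        show ffz σ a b β (p : Fin ℓ × Fin m) (((k 0 : ℕ) : ℤ) + (((e q) : ℕ) : ℤ)) = _
        rw [hexp]
      have hlam'0 : M0ᵀ.mulVecLin lam' = 0 := by
        funext p
        rw [Matrix.mulVecLin_apply]
        simp only [Matrix.mulVec, dotProduct, Matrix.transpose_apply, Pi.zero_apply]
        have h1 : ∑ d ∈ Finset.image e Finset.univ, M0 d p * lam' d
            = ∑ d : Fin (t + r), M0 d p * lam' d := by
          apply Finset.sum_subset (Finset.subset_univ _)
          intro d _ hd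
          have hz : lam' d = 0 := by
            simp only [hlamdef]
            rw [dif_neg]
            rintro ⟨q, hq⟩
            exact hd (Finset.mem_image.mpr ⟨q, Finset.mem_univ q, hq⟩)
          rw [hz, mul_zero]
        have h2 : ∑ d ∈ Finset.image e Finset.univ, M0 d p * lam' d
            = ∑ q : Fin (r + 1), M0 (e q) p * lam' (e q) :=
          Finset.sum_image (fun q _ q' _ h => heinj h)
        have h3 := congrFun hlam p
        rw [Matrix.mulVecLin_apply] at h3
        simp only [Matrix.mulVec, dotProduct, Matrix.transpose_apply, Pi.zero_apply] at h3
        rw [Fintype.sum_prod_type, Fin.sum_univ_one] at h3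
        rw [← h1, h2]
        rw [← h3]
        refine Finset.sum_congr rfl fun q _ => ?_
        rw [hlam'e q, hentry q p]
      have hlam'z : lam' = 0 := by
        have := hM0T
        rw [Submodule.eq_bot_iff] at this
        exact this lam' (LinearMap.mem_ker.mpr hlam'0)
      funext x
      have hx1 : x.1 = 0 := Fin.fin_one_eq_zero x.1
      have : lam (0, x.2) = lam' (e x.2) := (hlam'e x.2).symm
      rw [show x = (0, x.2) from Prod.ext hx1 rfl, this, hlam'z]
      rfl
    have h1 := LinearMap.finrank_range_add_finrank_ker (roosMat σ a b β k s J 0)ᵀ.mulVecLin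
    rw [hTker, finrank_bot, add_zero, Module.finrank_pi] at h1
    have h2 : Fintype.card (Fin (0 + 1) × Fin (r + 1)) = r + 1 := by
      simp [Fintype.card_prod]
    rw [h2] at h1
    rw [← Matrix.rank_transpose]
    unfold Matrix.rank
    exact h1
  -- kernel bound by induction
  suffices hker : ∀ i : ℕ, i < t →
      Module.finrank L (LinearMap.ker (roosMat σ a b β k s J i).mulVecLin) + (r + i + 1)
        ≤ t + r by
    intro i hi
    have h1 := hker i hi
    have h2 := hrn i
    omega
  intro i
  induction i with
  | zero =>
    intro _
    have h2 := hrn 0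
    rw [hbase] at h2
    omega
  | succ i IH =>
    intro hit
    have hIH := IH (by omega)
    by_contra hcon
    push_neg at hcon
    have hsub : LinearMap.ker (roosMat σ a b β k s J (i + 1)).mulVecLin
        ≤ LinearMap.ker (roosMat σ a b β k s J i).mulVecLin := by
      intro c hc
      rw [mem_ker_iff] at hc ⊢
      intro j q
      have h1 := hc (Fin.castSucc j) q
      rwa [Fin.coe_castSucc] at h1
    have heq : LinearMap.ker (roosMat σ a b β k s J (i + 1)).mulVecLin
        = LinearMap.ker (roosMat σ a b β k s J i).mulVecLin := by
      apply Submodule.eq_of_le_of_finrank_le hsub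
      omega
    set Z := LinearMap.ker (roosMat σ a b β k s J (i + 1)).mulVecLin with hZdef
    -- Ψ maps Z into Z
    have hΨZ : ∀ c ∈ Z, psiMap σ a s J c ∈ Z := by
      intro c hc
      rw [heq, mem_ker_iff]
      intro j q
      have hjq : Qsum σ a b β J c ((((j : ℕ) + 1) * s + k q : ℕ) : ℤ) = 0 := by
        rw [hZdef, mem_ker_iff] at hc
        have h1 := hc ⟨(j : ℕ) + 1, by omega⟩ q
        exact h1
      have h2 := qsum_psi σ a b β s J ha c _ hjq
      rw [show ((((j : ℕ) + 1) * s + k q : ℕ) : ℤ) - (s : ℤ)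
        = (((j : ℕ) * s + k q : ℕ) : ℤ) by push_cast; ring] at h2
      exact h2
    have hΨinj : Function.Injective (psiMap σ a s J) := by
      intro c₁ c₂ h
      funext p
      have h1 := congrFun h p
      rw [psiMap_apply, psiMap_apply] at h1
      have h2 := mul_right_cancel₀ (pow_ne_zero _ hA) h1
      exact ((σ ^ s)⁻¹ : L ≃ₐ[K] L).injective h2
    set ZK := Submodule.restrictScalars K Z with hZKdef
    have hΨZK : ∀ c ∈ ZK, psiMap σ a s J c ∈ ZK := hΨZ
    set F : ZK →ₗ[K] ZK := (psiMap σ a s J).restrict hΨZK with hFdef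
    have hFinj : Function.Injective F := by
      intro x y h
      apply Subtype.ext
      apply hΨinj
      exact congrArg Subtype.val h
    have hFsurj : Function.Surjective F := LinearMap.injective_iff_surjective.mp hFinj
    -- equations for all shifts j ≤ i + 1
    have hnonneg : ∀ c ∈ Z, ∀ j : ℤ, 0 ≤ j → j ≤ ((i : ℤ) + 1) → ∀ q : Fin (r + 1),
        Qsum σ a b β J c (j * s + k q) = 0 := by
      intro c hc j hj0 hj1 q
      rw [hZdef, mem_ker_iff] at hc
      have h1 := hc ⟨j.toNat, by omega⟩ q
      have hcast : ((j.toNat * s + k q : ℕ) : ℤ) = j * s + k q := by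
        push_cast [Int.toNat_of_nonneg hj0]
        ring
      rwa [hcast] at h1
    have hallj : ∀ (M : ℕ), ∀ c ∈ Z, ∀ j : ℤ, -(M : ℤ) ≤ j → j ≤ ((i : ℤ) + 1) →
        ∀ q : Fin (r + 1), Qsum σ a b β J c (j * s + k q) = 0 := by
      intro M
      induction M with
      | zero =>
        intro c hc j hj0 hj1 q
        exact hnonneg c hc j (by omega) hj1 q
      | succ M IHM =>
        intro c hc j hj0 hj1 q
        by_cases hj : 0 ≤ j
        · exact hnonneg c hc j hj hj1 q
        · obtain ⟨⟨c', hc'⟩, hFc⟩ := hFsurj ⟨c, hc⟩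
          have hc'eq : psiMap σ a s J c' = c := congrArg Subtype.val hFc
          have hq := IHM c' hc' (j + 1) (by omega) (by omega) q
          have h2 := qsum_psi σ a b β s J ha c' _ hq
          rw [show ((j + 1) * (s : ℤ) + (k q : ℤ)) - (s : ℤ)
            = j * s + k q by ring] at h2
          rwa [hc'eq] at h2
    -- every exponent
    have hallE : ∀ c ∈ Z, ∀ e : ℤ, Qsum σ a b β J c e = 0 := by
      intro c hc e
      have hcop : Nat.Coprime s (ℓ * m) := Nat.Coprime.mul_right hsl hsm
      have hbez := Nat.gcd_eq_gcd_ab s (ℓ * m)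
      rw [Nat.Coprime] at hcop
      rw [hcop] at hbez
      set x : ℤ := Nat.gcdA s (ℓ * m) with hxdef
      set y : ℤ := Nat.gcdB s (ℓ * m) with hydef
      set n : ℤ := ((ℓ * m : ℕ) : ℤ) with hndef
      have hx : (s : ℤ) * x + n * y = 1 := by rw [← hbez]; simp
      have hn1 : 1 ≤ n := by
        have h1 : 0 < ℓ * m := Nat.pos_of_ne_zero (mul_ne_zero (NeZero.ne ℓ) (NeZero.ne m))
        omega
      set X : ℤ := x * (e - k 0) with hXdef
      set C : ℤ := (X.natAbs : ℤ) + 1 with hCdef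
      set j : ℤ := X - n * C with hjdef
      have hjle : j ≤ 0 := by
        have h1 : X ≤ (X.natAbs : ℤ) := Int.le_natAbs
        have h2 : (1 : ℤ) * C ≤ n * C := by
          apply mul_le_mul_of_nonneg_right hn1
          omega
        omega
      have hdecomp : e = (j * s + k 0) + n * ((e - k 0) * y + C * s) := by
        rw [hjdef, hXdef]
        linear_combination ((k 0 : ℤ) - e) * hx
      have hq0 := hallj j.natAbs c hc j (by omega) (by omega) 0
      have h2 := qsum_period σ a b β J hσm ha c (j * s + k 0) ((e - k 0) * y + C * s) hq0
      rw [hdecomp]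
      exact h2
    -- hence Z = ⊥, contradiction
    have hZbot : Z = ⊥ := by
      rw [Submodule.eq_bot_iff]
      intro c hc
      apply qsum_zero_of_window σ a b β J hσgen hσm ha hlm c 0
      intro d hd
      exact hallE c hc (0 + d)
    have hzero : Module.finrank L Z = 0 := by
      rw [hZbot]
      exact finrank_bot L _
    omega

end RankMain


/-- With the assumptions of Statement 2 and a positive integer `s`
coprime with `ℓ` and `m`, the stacked matrices `A_i` `(0 ≤ i ≤ t-1)` satisfy
`rank(A_i) ≥ r + i + 1`; in particular `rank(A_{t-1}) = r + t`. -/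
theorem rank_stacked_matrices
    -- the tower of fields E ⊆ F, K ⊆ L = FK with F/E of degree m, K/E of degree h
    (E F K L : Type*) [Field E] [Field F] [Field K] [Field L]
    [Algebra E F] [Algebra E K] [Algebra E L] [Algebra F L] [Algebra K L]
    [IsScalarTower E F L] [IsScalarTower E K L]
    (m h ℓ : ℕ) [NeZero m] [NeZero ℓ]
    (hFE : Module.finrank E F = m) (hKE : Module.finrank E K = h)
    (hcap : Set.range (algebraMap F L) ∩ Set.range (algebraMap K L)
      = Set.range (algebraMap E L))
    (hcomp : Algebra.adjoin K (Set.range (algebraMap F L)) = ⊤)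
    -- L/K cyclic Galois of degree m with generator σ
    [IsGalois K L] (hLK : Module.finrank K L = m)
    (σ : L ≃ₐ[K] L) (hσgen : ∀ τ : L ≃ₐ[K] L, τ ∈ Subgroup.zpowers σ)
    -- ℓ coprime with m and with the characteristic of K
    (hlm : Nat.Coprime ℓ m) (hchar : (ℓ : K) ≠ 0)
    -- a primitive ℓ-th root of unity a ∈ K, an integer b ≥ 0, a K-basis 𝓔 of L
    (a : K) (ha : IsPrimitiveRoot a ℓ) (b : ℕ) (β : Module.Basis (Fin m) K L)
    -- positive integers t, r and k₀ < ⋯ < k_r in {0,…,n-1} with k_r - k₀ ≤ t+r-1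
    (t r : ℕ) (ht : 0 < t) (hr : 0 < r) (k : Fin (r + 1) → ℕ)
    (hkmono : StrictMono k) (hkn : ∀ s', k s' < ℓ * m)
    (hkspread : k (Fin.last r) - k 0 ≤ t + r - 1)
    -- the selections J i of j_i distinct elements of each B_i, with Σ j_i = t+r
    (J : Fin ℓ → Finset (Fin m)) (hJ : ∑ i, (J i).card = t + r)
    -- a positive integer s coprime with ℓ and m
    (s : ℕ) (hs : 0 < s) (hsl : Nat.Coprime s ℓ) (hsm : Nat.Coprime s m) :
    (∀ i : ℕ, i < t → r + i + 1 ≤ (roosMat σ a b β k s J i).rank) ∧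
      (roosMat σ a b β k s J (t - 1)).rank = r + t := by
  have hlb := roosMat_rank_lb σ a b β k s J hLK hσgen hlm ha ht hr hkmono hkspread hJ
    hs hsl hsm
  refine ⟨fun i hi => hlb i hi, ?_⟩
  have hcard : Fintype.card {p : Fin ℓ × Fin m // p.2 ∈ J p.1} = t + r := by
    rw [Fintype.card_congr
      (Equiv.subtypeProdEquivSigmaSubtype (fun (x : Fin ℓ) (u : Fin m) => u ∈ J x)),
      Fintype.card_sigma, ← hJ]
    exact Finset.sum_congr rfl fun x _ => Fintype.card_coe (J x)
  have hub := Matrix.rank_le_card_width (roosMat σ a b β k s J (t - 1))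
  rw [hcard] at hub
  have hlb2 := hlb (t - 1) (by omega)
  omega
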